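/- Under hypotheses (2.5) and (2.6) with Δ ∈ (0,1/2], the set S_1 = {x ∈ F_p : φ(x) > (Δ/8)φ(0)} satisfies Δp/(2φ(0)) < |S_1| < 8p/(Δφ(0)), and S_2 := S_1 \ {0} satisfies |S_2| ≥ |S_1|/2. -/

import Mathlib

open Finset Complex
open scoped Classical BigOperators Pointwise

/-- The additive character `x ↦ e^{2πix/p}` on `ZMod p`. -/
noncomputable def ePsi (p : ℕ) (x : ZMod p) : ℂ :=
  Complex.exp (2 * Real.pi * Complex.I * (x.val : ℂ) / (p : ℂ))

/-- Fourier transform of a (real) measure on `ZMod p`. -/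
noncomputable def ft (p : ℕ) [NeZero p] (μ : ZMod p → ℝ) (ξ : ZMod p) : ℂ :=
  ∑ x : ZMod p, (μ x : ℂ) * ePsi p (x * ξ)

/-- Convolution of two functions on `ZMod p`. -/
noncomputable def cnv (p : ℕ) [NeZero p] (f g : ZMod p → ℝ) (x : ZMod p) : ℝ :=
  ∑ y : ZMod p, f y * g (x - y)

/-- `φ(x) = p · (μ ∗ μ⁻)(x)`. -/
noncomputable def phiF (p : ℕ) [NeZero p] (μ : ZMod p → ℝ) (x : ZMod p) : ℝ :=
  (p : ℝ) * cnv p μ (fun y => μ (-y)) x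

/-- `k`-fold convolution of `f` (0-fold is the Dirac mass at 0). -/
noncomputable def convIter (p : ℕ) [NeZero p] (f : ZMod p → ℝ) : ℕ → ZMod p → ℝ
  | 0 => fun x => if x = 0 then 1 else 0
  | n + 1 => cnv p f (convIter p f n)

/-- `ν_k`, the `k`-fold convolution of `ν = μ ∗ μ⁻`. -/
noncomputable def nuk (p : ℕ) [NeZero p] (μ : ZMod p → ℝ) (k : ℕ) : ZMod p → ℝ :=
  convIter p (cnv p μ (fun y => μ (-y))) k

/-- `Λ_δ`, the set of large Fourier coefficients. -/
noncomputable def Lam (p : ℕ) [NeZero p] (μ : ZMod p → ℝ) (δ : ℝ) : Finset (ZMod p) :=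
  Finset.univ.filter (fun ξ => (p : ℝ) ^ (-δ) < ‖ft p μ ξ‖)

set_option maxHeartbeats 1600000
set_option linter.unusedSectionVars false

section helpers
variable {p : ℕ} [hp : Fact p.Prime]

lemma hpc : (p : ℂ) ≠ 0 := Nat.cast_ne_zero.mpr hp.out.pos.ne'

lemma ePsi_natCast (n : ℕ) :
    ePsi p (n : ZMod p) = Complex.exp (2 * Real.pi * Complex.I * (n : ℂ) / (p : ℂ)) := by
  have hp0 : (p : ℂ) ≠ 0 := hpc
  rw [ePsi, ZMod.val_natCast]
  have hn : (n : ℂ) = ((n % p : ℕ) : ℂ) + ((n / p : ℕ) : ℂ) * (p : ℂ) := by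
    exact_mod_cast congrArg (Nat.cast : ℕ → ℂ) (Nat.mod_add_div' n p).symm
  rw [show 2 * (Real.pi:ℂ) * Complex.I * (n : ℂ) / (p : ℂ)
      = 2 * (Real.pi:ℂ) * Complex.I * ((n % p : ℕ) : ℂ) / (p : ℂ)
        + ((n / p : ℕ) : ℂ) * (2 * Real.pi * Complex.I) by
    rw [hn]; field_simp]
  have h1 : Complex.exp (((n / p : ℕ) : ℂ) * (2 * Real.pi * Complex.I)) = 1 := by
    simpa using Complex.exp_int_mul_two_pi_mul_I ((n / p : ℕ) : ℤ)
  rw [Complex.exp_add, h1, mul_one]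

lemma ePsi_zero : ePsi p 0 = 1 := by
  simp [ePsi]

lemma ePsi_add (a b : ZMod p) : ePsi p (a + b) = ePsi p a * ePsi p b := by
  have ha : ((a.val : ℕ) : ZMod p) = a := by simp [ZMod.natCast_val, ZMod.cast_id]
  have hb : ((b.val : ℕ) : ZMod p) = b := by simp [ZMod.natCast_val, ZMod.cast_id]
  have : a + b = ((a.val + b.val : ℕ) : ZMod p) := by push_cast [ha, hb]; ring
  rw [this, ePsi_natCast, ePsi, ePsi]
  rw [← Complex.exp_add]
  congr 1
  push_cast
  ring

lemma ePsi_ne_zero (a : ZMod p) : ePsi p a ≠ 0 := Complex.exp_ne_zero _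

lemma ePsi_abs (a : ZMod p) : ‖ePsi p a‖ = 1 := by
  rw [ePsi, show 2 * (Real.pi:ℂ) * Complex.I * (a.val : ℂ) / (p : ℂ)
      = ((2 * Real.pi * (a.val : ℝ) / (p : ℝ) : ℝ) : ℂ) * Complex.I by push_cast; ring]
  exact Complex.norm_exp_ofReal_mul_I _

lemma ePsi_conj (a : ZMod p) :
    (starRingEnd ℂ) (ePsi p a) = ePsi p (-a) := by
  have h1 : ePsi p (-a) * ePsi p a = 1 := by
    rw [← ePsi_add, neg_add_cancel, ePsi_zero]
  have h2 : (starRingEnd ℂ) (ePsi p a) * ePsi p a = 1 := by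
    rw [mul_comm, Complex.mul_conj]
    norm_cast
    rw [← Complex.sq_norm, ePsi_abs, one_pow]
  exact mul_right_cancel₀ (ePsi_ne_zero a) (h2.trans h1.symm)

lemma sum_ePsi (c : ZMod p) :
    ∑ ξ : ZMod p, ePsi p (c * ξ) = if c = 0 then (p : ℂ) else 0 := by
  split_ifs with hc
  · subst hc
    simp [ePsi_zero, Finset.card_univ, ZMod.card]
  · have h1 : ∑ ξ : ZMod p, ePsi p (c * ξ) = ∑ ξ : ZMod p, ePsi p ξ :=
      Fintype.sum_bijective (fun ξ : ZMod p => c * ξ) (Equiv.mulLeft₀ c hc).bijective _ _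
        (fun x => rfl)
    rw [h1]
    have h2 : ∑ ξ : ZMod p, ePsi p (ξ + 1) = ∑ ξ : ZMod p, ePsi p ξ :=
      Fintype.sum_bijective (fun ξ : ZMod p => ξ + 1) (Equiv.addRight (1 : ZMod p)).bijective _ _
        (fun x => rfl)
    have h3 : ∑ ξ : ZMod p, ePsi p (ξ + 1) = (∑ ξ : ZMod p, ePsi p ξ) * ePsi p 1 := by
      rw [Finset.sum_mul]
      exact Finset.sum_congr rfl fun x _ => ePsi_add x 1
    have hne : ePsi p 1 ≠ 1 := by
      haveI : Fact (1 < p) := ⟨hp.out.one_lt⟩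
      rw [ePsi, ZMod.val_one]
      intro h
      obtain ⟨n, hn⟩ := Complex.exp_eq_one_iff.mp h
      have h2pi : (2 * (Real.pi : ℂ) * Complex.I) ≠ 0 := by
        simp [Real.pi_ne_zero, Complex.I_ne_zero, Complex.ofReal_ne_zero]
      have hnp : ((n * p : ℤ) : ℂ) = 1 := by
        push_cast
        have hp0 : (p : ℂ) ≠ 0 := hpc
        field_simp at hn ⊢
        have h5 : ((n:ℂ) * p) * (2 * Real.pi * Complex.I)
            = 1 * (2 * Real.pi * Complex.I) := by linear_combination (-(2 * Real.pi * Complex.I)) * hn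
        linear_combination (mul_right_cancel₀ h2pi h5)
      have : (n * p : ℤ) = 1 := by exact_mod_cast hnp
      have hp2 : (2 : ℤ) ≤ (p : ℤ) := by exact_mod_cast hp.out.two_le
      rcases le_or_gt n 0 with h'|h'
      · nlinarith
      · nlinarith
    have h4 : (∑ ξ : ZMod p, ePsi p ξ) * (ePsi p 1 - 1) = 0 := by
      rw [mul_sub, mul_one, ← h3, h2, sub_self]
    rcases mul_eq_zero.mp h4 with h|h
    · exact h
    · exact absurd (sub_eq_zero.mp h) hne


lemma ft_apply_zero (f : ZMod p → ℝ) : ft p f 0 = ((∑ x : ZMod p, f x : ℝ) : ℂ) := by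
  rw [ft]
  push_cast
  exact Finset.sum_congr rfl fun x _ => by rw [mul_zero, ePsi_zero, mul_one]

lemma ft_conj (f : ZMod p → ℝ) (ξ : ZMod p) :
    (starRingEnd ℂ) (ft p f ξ) = ∑ x : ZMod p, (f x : ℂ) * ePsi p (-(x * ξ)) := by
  rw [ft, map_sum]
  exact Finset.sum_congr rfl fun x _ => by
    rw [map_mul, Complex.conj_ofReal, ePsi_conj]

lemma abs_sq_cast (z : ℂ) :
    ((‖z‖ ^ 2 : ℝ) : ℂ) = z * (starRingEnd ℂ) z := by
  rw [Complex.sq_norm, Complex.mul_conj]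

lemma parseval (f : ZMod p → ℝ) :
    ∑ ξ : ZMod p, (‖ft p f ξ‖)^2 = p * ∑ x : ZMod p, (f x)^2 := by
  have key : ((∑ ξ : ZMod p, (‖ft p f ξ‖)^2 : ℝ) : ℂ)
      = ((p * ∑ x : ZMod p, (f x)^2 : ℝ) : ℂ) := by
    push_cast
    calc ∑ ξ : ZMod p, ((‖ft p f ξ‖ : ℂ))^2
        = ∑ ξ : ZMod p, ft p f ξ * (starRingEnd ℂ) (ft p f ξ) := by
          refine Finset.sum_congr rfl fun ξ _ => ?_
          rw [← abs_sq_cast]; push_cast; ring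
      _ = ∑ ξ : ZMod p, ∑ a : ZMod p, ∑ b : ZMod p,
            (f a : ℂ) * (f b : ℂ) * ePsi p ((a - b) * ξ) := by
          refine Finset.sum_congr rfl fun ξ _ => ?_
          rw [ft_conj, ft, Finset.sum_mul_sum]
          refine Finset.sum_congr rfl fun a _ => Finset.sum_congr rfl fun b _ => ?_
          rw [show ((a - b) * ξ) = a * ξ + -(b * ξ) by ring, ePsi_add]
          ring
      _ = ∑ a : ZMod p, ∑ b : ZMod p,
            (f a : ℂ) * (f b : ℂ) * ∑ ξ : ZMod p, ePsi p ((a - b) * ξ) := by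
          rw [Finset.sum_comm]
          refine Finset.sum_congr rfl fun a _ => ?_
          rw [Finset.sum_comm]
          refine Finset.sum_congr rfl fun b _ => ?_
          rw [Finset.mul_sum]
      _ = ∑ a : ZMod p, ∑ b : ZMod p,
            (f a : ℂ) * (f b : ℂ) * (if a = b then (p : ℂ) else 0) := by
          refine Finset.sum_congr rfl fun a _ => Finset.sum_congr rfl fun b _ => ?_
          rw [sum_ePsi]
          congr 1
          simp [sub_eq_zero]
      _ = (p : ℂ) * ∑ x : ZMod p, ((f x : ℂ))^2 := by
          rw [Finset.mul_sum]
          refine Finset.sum_congr rfl fun a _ => ?_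
          simp only [mul_ite, mul_zero]
          rw [Finset.sum_ite_eq Finset.univ a (fun b => (f a : ℂ) * (f b : ℂ) * (p:ℂ))]
          simp only [Finset.mem_univ, if_true]
          ring
  exact_mod_cast key

lemma ft_cnv (f g : ZMod p → ℝ) (ξ : ZMod p) :
    ft p (cnv p f g) ξ = ft p f ξ * ft p g ξ := by
  rw [ft, ft, ft, Finset.sum_mul_sum]
  have step : ∀ x : ZMod p, ((cnv p f g x : ℝ) : ℂ) * ePsi p (x * ξ)
      = ∑ y : ZMod p, (f y : ℂ) * (g (x - y) : ℂ) * ePsi p (x * ξ) := by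
    intro x
    rw [cnv]
    push_cast
    rw [Finset.sum_mul]
  rw [Finset.sum_congr rfl fun x _ => step x, Finset.sum_comm]
  refine Finset.sum_congr rfl fun y _ => ?_
  have : ∀ z : ZMod p, (f y : ℂ) * (g z : ℂ) * ePsi p ((z + y) * ξ)
      = (f y : ℂ) * (g ((z + y) - y) : ℂ) * ePsi p ((z + y) * ξ) := by
    intro z; rw [add_sub_cancel_right]
  calc ∑ x : ZMod p, (f y : ℂ) * (g (x - y) : ℂ) * ePsi p (x * ξ)
      = ∑ z : ZMod p, (f y : ℂ) * (g z : ℂ) * ePsi p ((z + y) * ξ) :=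
        (Fintype.sum_bijective (fun z : ZMod p => z + y)
          (Equiv.addRight y).bijective _ _ (fun z => by
            rw [add_sub_cancel_right])).symm
    _ = ∑ z : ZMod p, (f y : ℂ) * ePsi p (y * ξ) * ((g z : ℂ) * ePsi p (z * ξ)) := by
        refine Finset.sum_congr rfl fun z _ => ?_
        rw [show ((z + y) * ξ) = y * ξ + z * ξ by ring, ePsi_add]
        ring

lemma ft_nu (μ : ZMod p → ℝ) (ξ : ZMod p) :
    ft p (cnv p μ (fun y => μ (-y))) ξ = ((‖ft p μ ξ‖)^2 : ℝ) := by
  rw [ft_cnv, abs_sq_cast, ft_conj]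
  congr 1
  rw [ft]
  exact (Fintype.sum_bijective (fun x : ZMod p => -x)
    (Equiv.neg (ZMod p)).bijective _ _ (fun x => by rw [neg_neg, neg_mul])).symm


end helpers

theorem stmt4 (p : ℕ) [Fact p.Prime] (μ : ZMod p → ℝ)
    (hpos : ∀ x, 0 ≤ μ x) (hsum : ∑ x : ZMod p, μ x = 1)
    (Δ : ℝ) (hΔ0 : 0 < Δ) (hΔ1 : Δ ≤ 1 / 2)
    (h25 : ∑ ξ : ZMod p, ∑ y : ZMod p,
        ‖ft p μ ξ‖ ^ 2 * ‖ft p μ (y * ξ)‖ ^ 2 * μ y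
      > Δ * ∑ ξ : ZMod p, ‖ft p μ ξ‖ ^ 2)
    (h26a : μ 0 < Δ / 4) (h26b : ∑ x : ZMod p, (μ x) ^ 2 < Δ / 4)
    (S1 S2 : Finset (ZMod p))
    (hS1 : S1 = Finset.univ.filter (fun x => Δ / 8 * phiF p μ 0 < phiF p μ x))
    (hS2 : S2 = S1.erase 0) :
    Δ * p / (2 * phiF p μ 0) < (S1.card : ℝ) ∧
    (S1.card : ℝ) < 8 * p / (Δ * phiF p μ 0) ∧
    (S1.card : ℝ) / 2 ≤ (S2.card : ℝ) := by
  have hprime : p.Prime := Fact.out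
  have hp0 : (0:ℝ) < p := by exact_mod_cast hprime.pos
  set ν : ZMod p → ℝ := cnv p μ (fun y => μ (-y)) with hν
  have hφ : ∀ x, phiF p μ x = p * ν x := fun x => rfl
  have hνx : ∀ x, ν x = ∑ y : ZMod p, μ y * μ (y - x) := by
    intro x; rw [hν, cnv]; exact Finset.sum_congr rfl fun y _ => by rw [neg_sub]
  have hν0 : ν 0 = ∑ y : ZMod p, (μ y)^2 := by
    rw [hνx]; exact Finset.sum_congr rfl fun y _ => by rw [sub_zero, sq]
  have hμsq_pos : 0 < ∑ x : ZMod p, (μ x)^2 := by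
    by_contra h
    push_neg at h
    have hz : ∑ x : ZMod p, (μ x)^2 = 0 :=
      le_antisymm h (Finset.sum_nonneg fun x _ => sq_nonneg _)
    have h0 : ∀ x ∈ Finset.univ, (μ x)^2 = 0 :=
      (Finset.sum_eq_zero_iff_of_nonneg (fun x _ => sq_nonneg _)).mp hz
    have hz2 : ∑ x : ZMod p, μ x = 0 := Finset.sum_eq_zero fun x hx => by
      have := h0 x hx; nlinarith [this]
    rw [hsum] at hz2; norm_num at hz2
  have hφ0 : phiF p μ 0 = p * ∑ x : ZMod p, (μ x)^2 := by rw [hφ, hν0]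
  have hφ0pos : 0 < phiF p μ 0 := by rw [hφ0]; exact mul_pos hp0 hμsq_pos
  have hφ0lt : phiF p μ 0 < p * (Δ/4) := by
    rw [hφ0]; exact (mul_lt_mul_iff_right₀ hp0).mpr h26b
  have hνnn : ∀ x, 0 ≤ ν x := fun x => by
    rw [hνx]; exact Finset.sum_nonneg fun y _ => mul_nonneg (hpos y) (hpos _)
  have hφnn : ∀ x, 0 ≤ phiF p μ x := fun x => by
    rw [hφ]; exact mul_nonneg hp0.le (hνnn x)
  have hνle : ∀ x, ν x ≤ ∑ y : ZMod p, (μ y)^2 := by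
    intro x
    have hcs := Finset.sum_mul_sq_le_sq_mul_sq Finset.univ μ (fun y => μ (y - x))
    have hre : ∑ y : ZMod p, (μ y)^2 = ∑ y : ZMod p, (μ (y - x))^2 :=
      Fintype.sum_bijective (fun y : ZMod p => y + x) (Equiv.addRight x).bijective _ _
        (fun y => by rw [add_sub_cancel_right])
    have h1 : (∑ y : ZMod p, μ y * μ (y - x))^2
        ≤ (∑ y : ZMod p, (μ y)^2) * (∑ y : ZMod p, (μ y)^2) := by
      calc (∑ y : ZMod p, μ y * μ (y - x))^2
          ≤ (∑ y : ZMod p, (μ y)^2) * (∑ y : ZMod p, (μ (y - x))^2) := hcs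
        _ = _ := by rw [← hre]
    rw [hνx x]
    nlinarith [h1, hμsq_pos,
      Finset.sum_nonneg (fun y (_ : y ∈ Finset.univ) => mul_nonneg (hpos y) (hpos (y - x)))]
  have hφle : ∀ x, phiF p μ x ≤ phiF p μ 0 := fun x => by
    rw [hφ, hφ, hν0]; exact mul_le_mul_of_nonneg_left (hνle x) hp0.le
  have hsumν : ∑ x : ZMod p, ν x = 1 := by
    have h1 : ∑ x : ZMod p, ν x = ∑ y : ZMod p, μ y * ∑ x : ZMod p, μ (y - x) := by
      simp_rw [hνx]
      rw [Finset.sum_comm]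
      exact Finset.sum_congr rfl fun y _ => (Finset.mul_sum _ _ _).symm
    rw [h1]
    have h2 : ∀ y : ZMod p, ∑ x : ZMod p, μ (y - x) = 1 := by
      intro y
      rw [← hsum]
      exact Fintype.sum_bijective (fun x : ZMod p => y - x) (Equiv.subLeft y).bijective _ _
        (fun x => rfl)
    simp_rw [h2, mul_one]
    exact hsum
  have hsumφ : ∑ x : ZMod p, phiF p μ x = p := by
    simp_rw [hφ]; rw [← Finset.mul_sum, hsumν, mul_one]
  set T := ∑ ξ : ZMod p, ‖ft p μ ξ‖ ^ 2 with hT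
  set Q := ∑ ξ : ZMod p, ‖ft p μ ξ‖ ^ 4 with hQ
  have hTnn : 0 ≤ T := Finset.sum_nonneg fun _ _ => sq_nonneg _
  have hQnn : 0 ≤ Q := Finset.sum_nonneg fun _ _ =>
    pow_nonneg (norm_nonneg _) 4
  have hTφ0 : T = phiF p μ 0 := by rw [hT, parseval, hφ0]
  have habsft0 : ‖ft p μ 0‖ = 1 := by
    rw [ft_apply_zero, hsum]; simp
  have hQν : Q = (p:ℝ) * ∑ x : ZMod p, (ν x)^2 := by
    rw [hQ, ← parseval ν]
    refine Finset.sum_congr rfl fun ξ _ => ?_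
    have h := ft_nu (p := p) μ ξ
    rw [← hν] at h
    rw [h, Complex.norm_real, Real.norm_eq_abs, _root_.sq_abs]
    ring
  have hsumφsq : ∑ x : ZMod p, (phiF p μ x)^2 = (p:ℝ) * Q := by
    simp_rw [hφ, mul_pow]
    rw [← Finset.mul_sum, hQν]; ring
  have hC0 : ∑ ξ : ZMod p, ‖ft p μ ξ‖ ^ 2 * ‖ft p μ ((0:ZMod p) * ξ)‖ ^ 2
      = T := by
    rw [hT]
    refine Finset.sum_congr rfl fun ξ _ => ?_
    rw [zero_mul, habsft0]; norm_num
  have hCy : ∀ y : ZMod p, y ≠ 0 →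
      ∑ ξ : ZMod p, ‖ft p μ ξ‖ ^ 2 * ‖ft p μ (y * ξ)‖ ^ 2 ≤ Q := by
    intro y hy
    have hcs := Finset.sum_mul_sq_le_sq_mul_sq Finset.univ
      (fun ξ : ZMod p => ‖ft p μ ξ‖ ^ 2)
      (fun ξ : ZMod p => ‖ft p μ (y * ξ)‖ ^ 2)
    have e1 : ∑ ξ : ZMod p, (‖ft p μ ξ‖ ^ 2) ^ 2 = Q := by
      rw [hQ]; exact Finset.sum_congr rfl fun ξ _ => by ring
    have e2 : ∑ ξ : ZMod p, (‖ft p μ (y * ξ)‖ ^ 2) ^ 2 = Q := by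
      rw [hQ]
      exact Fintype.sum_bijective (fun ξ : ZMod p => y * ξ)
        (Equiv.mulLeft₀ y hy).bijective
        (fun ξ => (‖ft p μ (y * ξ)‖ ^ 2) ^ 2)
        (fun ξ => ‖ft p μ ξ‖ ^ 4)
        (fun ξ => by ring)
    have hsnn : 0 ≤ ∑ ξ : ZMod p, ‖ft p μ ξ‖ ^ 2 * ‖ft p μ (y * ξ)‖ ^ 2 :=
      Finset.sum_nonneg fun ξ _ => mul_nonneg (sq_nonneg _) (sq_nonneg _)
    nlinarith [hcs, e1, e2, hsnn, hQnn]
  have h25' : Δ * T < μ 0 * T + Q := by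
    have hswap : ∑ ξ : ZMod p, ∑ y : ZMod p,
        ‖ft p μ ξ‖ ^ 2 * ‖ft p μ (y * ξ)‖ ^ 2 * μ y
        = ∑ y : ZMod p, μ y *
            ∑ ξ : ZMod p, ‖ft p μ ξ‖ ^ 2 * ‖ft p μ (y * ξ)‖ ^ 2 := by
      rw [Finset.sum_comm]
      refine Finset.sum_congr rfl fun y _ => ?_
      rw [Finset.mul_sum]
      exact Finset.sum_congr rfl fun ξ _ => by ring
    rw [hswap] at h25
    have hsplit : ∑ y : ZMod p, μ y *
          ∑ ξ : ZMod p, ‖ft p μ ξ‖ ^ 2 * ‖ft p μ (y * ξ)‖ ^ 2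
        = μ 0 * T + ∑ y ∈ Finset.univ.erase 0, μ y *
            ∑ ξ : ZMod p, ‖ft p μ ξ‖ ^ 2 * ‖ft p μ (y * ξ)‖ ^ 2 := by
      rw [← Finset.add_sum_erase Finset.univ _ (Finset.mem_univ (0 : ZMod p)), hC0]
    rw [hsplit] at h25
    have hrest : ∑ y ∈ Finset.univ.erase 0, μ y *
          ∑ ξ : ZMod p, ‖ft p μ ξ‖ ^ 2 * ‖ft p μ (y * ξ)‖ ^ 2
        ≤ Q := by
      calc ∑ y ∈ Finset.univ.erase 0, μ y *
            ∑ ξ : ZMod p, ‖ft p μ ξ‖ ^ 2 * ‖ft p μ (y * ξ)‖ ^ 2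
          ≤ ∑ y ∈ Finset.univ.erase 0, μ y * Q := by
            refine Finset.sum_le_sum fun y hy => ?_
            exact mul_le_mul_of_nonneg_left (hCy y (Finset.ne_of_mem_erase hy)) (hpos y)
        _ = (∑ y ∈ Finset.univ.erase 0, μ y) * Q := by rw [Finset.sum_mul]
        _ ≤ 1 * Q := by
            refine mul_le_mul_of_nonneg_right ?_ hQnn
            rw [← hsum]
            exact Finset.sum_le_sum_of_subset_of_nonneg (Finset.erase_subset _ _)
              (fun x _ _ => hpos x)
        _ = Q := one_mul Q
    linarith
  have hQ34 : 3/4 * Δ * T < Q := by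
    nlinarith [h25', mul_le_mul_of_nonneg_right h26a.le hTnn]
  have hn_low : Δ * p / (2 * phiF p μ 0) < (S1.card : ℝ) := by
    have hsplitφ : ∑ x ∈ Finset.univ \ S1, (phiF p μ x)^2 + ∑ x ∈ S1, (phiF p μ x)^2
        = ∑ x : ZMod p, (phiF p μ x)^2 := Finset.sum_sdiff (Finset.subset_univ S1)
    have h1 : ∑ x ∈ S1, (phiF p μ x)^2 ≤ (S1.card : ℝ) * (phiF p μ 0)^2 := by
      calc ∑ x ∈ S1, (phiF p μ x)^2 ≤ ∑ _x ∈ S1, (phiF p μ 0)^2 :=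
            Finset.sum_le_sum fun x _ => pow_le_pow_left₀ (hφnn x) (hφle x) 2
        _ = (S1.card : ℝ) * (phiF p μ 0)^2 := by
            rw [Finset.sum_const, nsmul_eq_mul]
    have h2 : ∑ x ∈ Finset.univ \ S1, (phiF p μ x)^2 ≤ Δ/8 * phiF p μ 0 * p := by
      calc ∑ x ∈ Finset.univ \ S1, (phiF p μ x)^2
          ≤ ∑ x ∈ Finset.univ \ S1, (Δ/8 * phiF p μ 0) * phiF p μ x := by
            refine Finset.sum_le_sum fun x hx => ?_
            have hx' : phiF p μ x ≤ Δ/8 * phiF p μ 0 := by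
              rw [hS1] at hx
              simp only [Finset.mem_sdiff, Finset.mem_univ, true_and, Finset.mem_filter,
                not_and, not_lt] at hx
              exact hx
            rw [sq]
            exact mul_le_mul_of_nonneg_right hx' (hφnn x)
        _ = (Δ/8 * phiF p μ 0) * ∑ x ∈ Finset.univ \ S1, phiF p μ x := by
            rw [Finset.mul_sum]
        _ ≤ (Δ/8 * phiF p μ 0) * p := by
            refine mul_le_mul_of_nonneg_left ?_ (by positivity)
            calc ∑ x ∈ Finset.univ \ S1, phiF p μ x
                ≤ ∑ x : ZMod p, phiF p μ x :=
                  Finset.sum_le_sum_of_subset_of_nonneg (Finset.sdiff_subset)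
                    (fun x _ _ => hφnn x)
              _ = p := hsumφ
        _ = Δ/8 * phiF p μ 0 * p := by ring
    have hTQ : 3/4 * Δ * phiF p μ 0 < Q := by rw [← hTφ0]; exact hQ34
    have hkey : 3/4 * Δ * ((p:ℝ) * phiF p μ 0)
        < (S1.card : ℝ) * (phiF p μ 0)^2 + Δ/8 * phiF p μ 0 * p := by
      nlinarith [h1, h2, hsplitφ, hsumφsq, mul_lt_mul_of_pos_left hTQ hp0]
    rw [div_lt_iff₀ (by positivity : (0:ℝ) < 2 * phiF p μ 0)]
    nlinarith [hkey, hφ0pos, mul_pos (mul_pos hΔ0 hp0) hφ0pos]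
  refine ⟨hn_low, ?_, ?_⟩
  · have hne : S1.Nonempty := by
      rw [← Finset.card_pos]
      by_contra h
      push_neg at h
      have h0 : S1.card = 0 := by omega
      rw [h0] at hn_low
      norm_num at hn_low
      have hpos' : (0:ℝ) < Δ * ↑p / (2 * phiF p μ 0) := by positivity
      linarith
    have hstrict : (S1.card : ℝ) * (Δ/8 * phiF p μ 0) < ∑ x ∈ S1, phiF p μ x := by
      have h3 := Finset.sum_lt_sum_of_nonempty hne
        (f := fun _ => Δ/8 * phiF p μ 0) (g := fun x => phiF p μ x)
        (fun x hx => by rw [hS1] at hx; exact (Finset.mem_filter.mp hx).2)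
      calc (S1.card : ℝ) * (Δ/8 * phiF p μ 0) = ∑ _x ∈ S1, Δ/8 * phiF p μ 0 := by
            rw [Finset.sum_const, nsmul_eq_mul]
        _ < _ := h3
    have hle : ∑ x ∈ S1, phiF p μ x ≤ p := by
      calc ∑ x ∈ S1, phiF p μ x ≤ ∑ x : ZMod p, phiF p μ x :=
            Finset.sum_le_sum_of_subset_of_nonneg (Finset.subset_univ S1)
              (fun x _ _ => hφnn x)
        _ = p := hsumφ
    rw [lt_div_iff₀ (by positivity : (0:ℝ) < Δ * phiF p μ 0)]
    nlinarith [hstrict, hle]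
  · have h2lt : (2:ℝ) < Δ * p / (2 * phiF p μ 0) := by
      rw [lt_div_iff₀ (by positivity : (0:ℝ) < 2 * phiF p μ 0)]
      nlinarith [hφ0lt, hΔ0, hp0]
    have hcast : (2:ℝ) < (S1.card : ℝ) := lt_trans h2lt hn_low
    have hcard3 : 3 ≤ S1.card := by
      have : 2 < S1.card := by exact_mod_cast hcast
      omega
    have herase : S1.card - 1 ≤ S2.card := by
      rw [hS2]; exact Finset.pred_card_le_card_erase
    have : S1.card ≤ 2 * S2.card := by omega
    rw [div_le_iff₀ (by norm_num : (0:ℝ) < 2)]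
    calc (S1.card : ℝ) ≤ ((2 * S2.card : ℕ) : ℝ) := by exact_mod_cast this
      _ = (S2.card : ℝ) * 2 := by push_cast; ring
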